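/- Let 0 < α ≤ √2 − 1. Then the probability generating function of any ℕ-valued random variable X satisfying the recursive distributional equation is G(s) = (1/2)((1+α)s + 1 − α + √(((1+α)s + 1 − α)² − 4s·exp(α(s−1)))) for all s ∈ [0,1]. -/

import Mathlib

open scoped ENNReal

/-- The Poisson(α) probability mass function on ℕ. -/
noncomputable def poissonPMF (α : ℝ) (k : ℕ) : ℝ≥0∞ :=
  ENNReal.ofReal (Real.exp (-α) * α ^ k / (Nat.factorial k))

/-- The Geometric(1/2) pmf: P(N = k) = (1/2)^(k+1) for k ≥ 0. -/
noncomputable def geomHalf (k : ℕ) : ℝ≥0∞ := (1 / 2) ^ (k + 1)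

/-- The law of (X - 1)⁺ when X has law μ on ℕ. -/
noncomputable def shiftLaw (μ : ℕ → ℝ≥0∞) (k : ℕ) : ℝ≥0∞ :=
  if k = 0 then μ 0 + μ 1 else μ (k + 1)

/-- Convolution of two (sub-)pmfs on ℕ: the law of an independent sum. -/
noncomputable def convAdd (f g : ℕ → ℝ≥0∞) (k : ℕ) : ℝ≥0∞ :=
  ∑ j ∈ Finset.range (k + 1), f j * g (k - j)

/-- n-fold convolution of a pmf on ℕ: the law of a sum of n i.i.d. copies. -/
noncomputable def iterConv (f : ℕ → ℝ≥0∞) : ℕ → ℕ → ℝ≥0∞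
  | 0 => fun k => if k = 0 then 1 else 0
  | n + 1 => convAdd (iterConv f n) f

/-- μ is the law of an ℕ-valued random variable X satisfying the RDE
    X =_d P + ∑_{i=1}^N (X_i - 1)⁺, with P ~ Poisson(α), N ~ Geom(1/2),
    X_i i.i.d. with law μ, all independent. -/
def SatisfiesRDE (α : ℝ) (μ : ℕ → ℝ≥0∞) : Prop :=
  (∑' k, μ k) = 1 ∧
  ∀ k, μ k = ∑' n, geomHalf n * convAdd (poissonPMF α) (iterConv (shiftLaw μ) n) k

/-- The probability generating function G(s) = E[s^X]. -/
noncomputable def pgf (μ : ℕ → ℝ≥0∞) (s : ℝ) : ℝ := ∑' k, (μ k).toReal * s ^ k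

/-- The mean E[X] = ∑ k · P(X = k), valued in [0,∞]. -/
noncomputable def meanENN (μ : ℕ → ℝ≥0∞) : ℝ≥0∞ := ∑' k : ℕ, (k : ℝ≥0∞) * μ k

noncomputable def pgfE (f : ℕ → ℝ≥0∞) (σ : ℝ≥0∞) : ℝ≥0∞ := ∑' k, f k * σ ^ k

lemma tsum_antidiag (F : ℕ → ℕ → ℝ≥0∞) :
    ∑' k, ∑ j ∈ Finset.range (k + 1), F j (k - j) = ∑' j, ∑' i, F j i := by
  set f : ℕ × ℕ → ℝ≥0∞ := fun q => if q.1 ≤ q.2 then F q.1 (q.2 - q.1) else 0 with hf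
  have hg : Function.Injective (fun p : ℕ × ℕ => (p.1, p.1 + p.2)) := by
    intro p q h
    simp only [Prod.mk.injEq] at h
    exact Prod.ext h.1 (by omega)
  have hsupp : Function.support f ⊆ Set.range (fun p : ℕ × ℕ => (p.1, p.1 + p.2)) := by
    intro q hq
    simp only [hf, Function.mem_support, ne_eq, ite_eq_right_iff, not_forall] at hq
    exact ⟨(q.1, q.2 - q.1), by simp [Nat.add_sub_cancel' hq.1]⟩
  have h1 : ∑' p : ℕ × ℕ, f (p.1, p.1 + p.2) = ∑' q, f q := hg.tsum_eq hsupp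
  have h2 : ∀ p : ℕ × ℕ, f (p.1, p.1 + p.2) = F p.1 p.2 := by
    intro p; simp [hf]
  calc ∑' k, ∑ j ∈ Finset.range (k + 1), F j (k - j)
      = ∑' k, ∑' j, f (j, k) := by
        refine tsum_congr fun k => ?_
        rw [tsum_eq_sum (s := Finset.range (k + 1)) (by
          intro j hj
          simp only [Finset.mem_range] at hj
          simp only [hf]
          rw [if_neg (by omega)])]
        refine (Finset.sum_congr rfl fun j hj => ?_).symm
        simp only [Finset.mem_range] at hj
        simp only [hf]
        rw [if_pos (by omega)]
    _ = ∑' j, ∑' k, f (j, k) := ENNReal.tsum_comm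
    _ = ∑' q : ℕ × ℕ, f q := ENNReal.tsum_prod'.symm
    _ = ∑' p : ℕ × ℕ, F p.1 p.2 := by rw [← h1]; exact tsum_congr fun p => h2 p
    _ = ∑' j, ∑' i, F j i := ENNReal.tsum_prod'

lemma pgfE_conv (f g : ℕ → ℝ≥0∞) (σ : ℝ≥0∞) :
    pgfE (convAdd f g) σ = pgfE f σ * pgfE g σ := by
  unfold pgfE convAdd
  have h : ∀ k : ℕ, (∑ j ∈ Finset.range (k + 1), f j * g (k - j)) * σ ^ k
      = ∑ j ∈ Finset.range (k + 1), (f j * σ ^ j) * (g (k - j) * σ ^ (k - j)) := by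
    intro k
    rw [Finset.sum_mul]
    refine Finset.sum_congr rfl fun j hj => ?_
    simp only [Finset.mem_range] at hj
    have h2 : σ ^ k = σ ^ j * σ ^ (k - j) := by rw [← pow_add]; congr 1; omega
    rw [h2]; ring
  simp_rw [h]
  rw [tsum_antidiag (fun j i => (f j * σ ^ j) * (g i * σ ^ i))]
  calc ∑' j, ∑' i, (f j * σ ^ j) * (g i * σ ^ i)
      = ∑' j, (f j * σ ^ j) * ∑' i, (g i * σ ^ i) := tsum_congr fun j => ENNReal.tsum_mul_left
    _ = (∑' j, f j * σ ^ j) * ∑' i, g i * σ ^ i := ENNReal.tsum_mul_right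

lemma pgfE_iterConv (f : ℕ → ℝ≥0∞) (σ : ℝ≥0∞) (n : ℕ) :
    pgfE (iterConv f n) σ = (pgfE f σ) ^ n := by
  induction n with
  | zero =>
      unfold pgfE iterConv
      rw [pow_zero, tsum_eq_single 0 (by intro b hb; simp [hb])]
      simp
  | succ n ih =>
      show pgfE (convAdd (iterConv f n) f) σ = _
      rw [pgfE_conv, ih, pow_succ]

lemma pgfE_poisson (α : ℝ) (hα : 0 ≤ α) {s : ℝ} (hs : 0 ≤ s) :
    pgfE (poissonPMF α) (ENNReal.ofReal s) = ENNReal.ofReal (Real.exp (α * (s - 1))) := by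
  unfold pgfE poissonPMF
  have hterm : ∀ k : ℕ,
      ENNReal.ofReal (Real.exp (-α) * α ^ k / k.factorial) * (ENNReal.ofReal s) ^ k
      = ENNReal.ofReal (Real.exp (-α) * ((α * s) ^ k / k.factorial)) := by
    intro k
    rw [← ENNReal.ofReal_pow hs, ← ENNReal.ofReal_mul (by positivity)]
    congr 1
    rw [mul_pow]; ring
  simp_rw [hterm]
  rw [← ENNReal.ofReal_tsum_of_nonneg (fun k => by positivity)
      ((Real.summable_pow_div_factorial (α * s)).mul_left _)]
  congr 1
  rw [tsum_mul_left]
  have hexp : ∑' k : ℕ, (α * s) ^ k / (k.factorial : ℝ) = Real.exp (α * s) := by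
    rw [Real.exp_eq_exp_ℝ]
    exact (NormedSpace.expSeries_div_hasSum_exp (α * s)).tsum_eq
  rw [hexp, ← Real.exp_add]
  congr 1; ring

lemma sum_shiftLaw (μ : ℕ → ℝ≥0∞) : ∑' k, shiftLaw μ k = ∑' k, μ k := by
  rw [tsum_eq_zero_add' ENNReal.summable]
  have h1 : ∀ k : ℕ, shiftLaw μ (k + 1) = μ (k + 2) := fun k => by simp [shiftLaw]
  simp_rw [h1]
  have h0 : shiftLaw μ 0 = μ 0 + μ 1 := by simp [shiftLaw]
  rw [h0]
  conv_rhs => rw [tsum_eq_zero_add' ENNReal.summable, tsum_eq_zero_add' ENNReal.summable]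
  rw [add_assoc]

lemma pgfE_le_total (f : ℕ → ℝ≥0∞) {σ : ℝ≥0∞} (hσ : σ ≤ 1) :
    pgfE f σ ≤ ∑' k, f k := by
  refine Summable.tsum_le_tsum (fun k => ?_) ENNReal.summable ENNReal.summable
  calc f k * σ ^ k ≤ f k * 1 := mul_le_mul_right (pow_le_one' hσ k) _
    _ = f k := mul_one _

lemma pgfE_shift_rel (μ : ℕ → ℝ≥0∞) (σ : ℝ≥0∞) :
    σ * pgfE (shiftLaw μ) σ + μ 0 = pgfE μ σ + μ 0 * σ := by
  have e1 : pgfE μ σ = μ 0 + μ 1 * σ + ∑' k, μ (k + 2) * σ ^ (k + 2) := by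
    unfold pgfE
    rw [tsum_eq_zero_add' ENNReal.summable]
    conv_lhs => rw [tsum_eq_zero_add' ENNReal.summable]
    rw [pow_zero, mul_one, ← add_assoc]
    norm_num
  have e2 : pgfE (shiftLaw μ) σ = (μ 0 + μ 1) + ∑' k, μ (k + 2) * σ ^ (k + 1) := by
    unfold pgfE
    rw [tsum_eq_zero_add' ENNReal.summable]
    have h0 : shiftLaw μ 0 = μ 0 + μ 1 := by simp [shiftLaw]
    have h1 : ∀ k : ℕ, shiftLaw μ (k + 1) = μ (k + 2) := fun k => by simp [shiftLaw]
    simp_rw [h1, h0, pow_zero, mul_one]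
  have e3 : σ * ∑' k, μ (k + 2) * σ ^ (k + 1) = ∑' k, μ (k + 2) * σ ^ (k + 2) := by
    rw [← ENNReal.tsum_mul_left]
    refine tsum_congr fun k => ?_
    rw [pow_succ]; ring
  rw [e1, e2, mul_add, e3]
  ring

lemma pgfE_rde (α : ℝ) (μ : ℕ → ℝ≥0∞) (hμ : SatisfiesRDE α μ) (σ : ℝ≥0∞) :
    pgfE μ σ = pgfE (poissonPMF α) σ *
      ∑' n, geomHalf n * (pgfE (shiftLaw μ) σ) ^ n := by
  have h1 : pgfE μ σ = ∑' n, geomHalf n *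
      pgfE (convAdd (poissonPMF α) (iterConv (shiftLaw μ) n)) σ := by
    unfold pgfE
    calc ∑' k, μ k * σ ^ k
        = ∑' k, (∑' n, geomHalf n * convAdd (poissonPMF α) (iterConv (shiftLaw μ) n) k) * σ ^ k := by
          exact tsum_congr fun k => by rw [← hμ.2 k]
      _ = ∑' k, ∑' n, geomHalf n * convAdd (poissonPMF α) (iterConv (shiftLaw μ) n) k * σ ^ k := by
          exact tsum_congr fun k => ENNReal.tsum_mul_right.symm
      _ = ∑' n, ∑' k, geomHalf n * (convAdd (poissonPMF α) (iterConv (shiftLaw μ) n) k * σ ^ k) := by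
          rw [ENNReal.tsum_comm]; simp_rw [mul_assoc]
      _ = ∑' n, geomHalf n * ∑' k, convAdd (poissonPMF α) (iterConv (shiftLaw μ) n) k * σ ^ k := by
          exact tsum_congr fun n => ENNReal.tsum_mul_left
  rw [h1]
  simp_rw [pgfE_conv, pgfE_iterConv]
  rw [← ENNReal.tsum_mul_left]
  refine tsum_congr fun n => ?_
  ring

lemma geom_funeq (P H : ℝ≥0∞) (hH1 : H ≤ 1) :
    (P * ∑' n, geomHalf n * H ^ n) * (2 - H) = P := by
  have hgeom : ∑' n, geomHalf n * H ^ n = 2⁻¹ * (1 - 2⁻¹ * H)⁻¹ := by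
    unfold geomHalf
    have h : ∀ n : ℕ, ((1:ℝ≥0∞) / 2) ^ (n + 1) * H ^ n = 2⁻¹ * (2⁻¹ * H) ^ n := by
      intro n
      rw [pow_succ, mul_pow, one_div]
      ring
    simp_rw [h]
    rw [ENNReal.tsum_mul_left, ENNReal.tsum_geometric]
  rw [hgeom]
  have hne0 : (1 - 2⁻¹ * H) ≠ 0 := by
    have h2 : 2⁻¹ * H ≤ 2⁻¹ * 1 := mul_le_mul_right hH1 _
    rw [mul_one] at h2
    intro h
    rw [tsub_eq_zero_iff_le] at h
    have : (1:ℝ≥0∞) ≤ 2⁻¹ := le_trans h h2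
    norm_num at this
  have hnetop : (1 - 2⁻¹ * H) ≠ ⊤ := ne_top_of_le_ne_top (by norm_num) tsub_le_self
  have hkey : 2⁻¹ * (1 - 2⁻¹ * H)⁻¹ * (2 - H) = 1 := by
    have h2H : 2 - H = 2 * (1 - 2⁻¹ * H) := by
      rw [ENNReal.mul_sub (by intro _ _; norm_num), mul_one, ← mul_assoc]
      have h21 : (2:ℝ≥0∞) * 2⁻¹ = 1 := ENNReal.mul_inv_cancel (by norm_num) (by norm_num)
      rw [h21, one_mul]
    rw [h2H]
    calc 2⁻¹ * (1 - 2⁻¹ * H)⁻¹ * (2 * (1 - 2⁻¹ * H))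
        = (2⁻¹ * 2) * ((1 - 2⁻¹ * H)⁻¹ * (1 - 2⁻¹ * H)) := by ring
      _ = 1 := by
          rw [ENNReal.inv_mul_cancel hne0 hnetop, ENNReal.inv_mul_cancel (by norm_num) (by norm_num)]
          norm_num
  calc P * (2⁻¹ * (1 - 2⁻¹ * H)⁻¹) * (2 - H)
      = P * (2⁻¹ * (1 - 2⁻¹ * H)⁻¹ * (2 - H)) := by ring
    _ = P := by rw [hkey, mul_one]

lemma pgfE_funeq (α : ℝ) (μ : ℕ → ℝ≥0∞) (hμ : SatisfiesRDE α μ) (σ : ℝ≥0∞) (hσ : σ ≤ 1) :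
    pgfE μ σ * (2 - pgfE (shiftLaw μ) σ) = pgfE (poissonPMF α) σ := by
  rw [pgfE_rde α μ hμ σ]
  exact geom_funeq _ _ (le_of_le_of_eq (pgfE_le_total _ hσ) (by rw [sum_shiftLaw]; exact hμ.1))

lemma pgf_eq_toReal {f : ℕ → ℝ≥0∞} (hf : ∀ k, f k ≠ ⊤) {s : ℝ} (hs : 0 ≤ s) :
    pgf f s = (pgfE f (ENNReal.ofReal s)).toReal := by
  unfold pgf pgfE
  rw [ENNReal.tsum_toReal_eq (fun k => ENNReal.mul_ne_top (hf k)
    (ENNReal.pow_ne_top ENNReal.ofReal_ne_top))]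
  exact tsum_congr fun k => by
    rw [ENNReal.toReal_mul, ENNReal.toReal_pow, ENNReal.toReal_ofReal hs]

section main
variable {α : ℝ} {μ : ℕ → ℝ≥0∞}

lemma mu_ne_top (h1 : (∑' k, μ k) = 1) : ∀ k, μ k ≠ ⊤ := fun k =>
  ne_top_of_le_ne_top ENNReal.one_ne_top (h1 ▸ ENNReal.le_tsum k)

lemma shift_ne_top (h1 : (∑' k, μ k) = 1) : ∀ k, shiftLaw μ k ≠ ⊤ := fun k =>
  ne_top_of_le_ne_top ENNReal.one_ne_top ((sum_shiftLaw μ ▸ h1 : (∑' k, shiftLaw μ k) = 1) ▸ ENNReal.le_tsum k)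

lemma pgfE_mu_le_one (h1 : (∑' k, μ k) = 1) {s : ℝ} (hs1 : s ≤ 1) :
    pgfE μ (ENNReal.ofReal s) ≤ 1 :=
  le_of_le_of_eq (pgfE_le_total _ (ENNReal.ofReal_le_one.mpr hs1)) h1

lemma pgfE_shift_le_one (h1 : (∑' k, μ k) = 1) {s : ℝ} (hs1 : s ≤ 1) :
    pgfE (shiftLaw μ) (ENNReal.ofReal s) ≤ 1 :=
  le_of_le_of_eq (pgfE_le_total _ (ENNReal.ofReal_le_one.mpr hs1))
    (by rw [sum_shiftLaw]; exact h1)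

/-- Real functional equation: G(s) (2 - H(s)) = e^{α(s-1)} -/
lemma real_funeq (hα : 0 ≤ α) (hμ : SatisfiesRDE α μ) {s : ℝ} (hs : s ∈ Set.Icc (0:ℝ) 1) :
    pgf μ s * (2 - pgf (shiftLaw μ) s) = Real.exp (α * (s - 1)) := by
  obtain ⟨hs0, hs1⟩ := hs
  have h1 := hμ.1
  have hfe := pgfE_funeq α μ hμ (ENNReal.ofReal s) (ENNReal.ofReal_le_one.mpr hs1)
  have hHle := pgfE_shift_le_one h1 hs1
  have hH2 : pgfE (shiftLaw μ) (ENNReal.ofReal s) ≤ 2 := le_trans hHle (by norm_num)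
  have := congrArg ENNReal.toReal hfe
  rw [ENNReal.toReal_mul, ENNReal.toReal_sub_of_le hH2 (by norm_num)] at this
  rw [pgfE_poisson α hα hs0, ENNReal.toReal_ofReal (Real.exp_nonneg _)] at this
  rw [pgf_eq_toReal (mu_ne_top h1) hs0, pgf_eq_toReal (shift_ne_top h1) hs0]
  simpa using this

/-- Real shift relation: s·H(s) + p = G(s) + p·s -/
lemma real_shift_rel (hμ : SatisfiesRDE α μ) {s : ℝ} (hs : s ∈ Set.Icc (0:ℝ) 1) :
    s * pgf (shiftLaw μ) s + (μ 0).toReal = pgf μ s + (μ 0).toReal * s := by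
  obtain ⟨hs0, hs1⟩ := hs
  have h1 := hμ.1
  have hrel := pgfE_shift_rel μ (ENNReal.ofReal s)
  have hHfin : pgfE (shiftLaw μ) (ENNReal.ofReal s) ≠ ⊤ :=
    ne_top_of_le_ne_top ENNReal.one_ne_top (pgfE_shift_le_one h1 hs1)
  have hGfin : pgfE μ (ENNReal.ofReal s) ≠ ⊤ :=
    ne_top_of_le_ne_top ENNReal.one_ne_top (pgfE_mu_le_one h1 hs1)
  have := congrArg ENNReal.toReal hrel
  rw [ENNReal.toReal_add (ENNReal.mul_ne_top ENNReal.ofReal_ne_top hHfin) (mu_ne_top h1 0),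
      ENNReal.toReal_add hGfin (ENNReal.mul_ne_top (mu_ne_top h1 0) ENNReal.ofReal_ne_top),
      ENNReal.toReal_mul, ENNReal.toReal_mul, ENNReal.toReal_ofReal hs0] at this
  rw [pgf_eq_toReal (mu_ne_top h1) hs0, pgf_eq_toReal (shift_ne_top h1) hs0]
  exact this

/-- The quadratic identity for G. -/
lemma quad_identity (hα : 0 ≤ α) (hμ : SatisfiesRDE α μ) {s : ℝ} (hs : s ∈ Set.Icc (0:ℝ) 1) :
    (pgf μ s) ^ 2 - ((2 - (μ 0).toReal) * s + (μ 0).toReal) * pgf μ s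
      + s * Real.exp (α * (s - 1)) = 0 := by
  have hfe := real_funeq hα hμ hs
  have hsh := real_shift_rel hμ hs
  linear_combination (-s) * hfe + (- pgf μ s) * hsh

end main

section facts
variable {μ : ℕ → ℝ≥0∞}

lemma pgf_at_one (h1 : (∑' k, μ k) = 1) : pgf μ 1 = 1 := by
  unfold pgf
  simp only [one_pow, mul_one]
  rw [← ENNReal.tsum_toReal_eq (mu_ne_top h1), h1, ENNReal.toReal_one]

lemma pgf_at_zero (μ : ℕ → ℝ≥0∞) : pgf μ 0 = (μ 0).toReal := by
  unfold pgf
  rw [tsum_eq_single 0 (fun k hk => by rw [zero_pow hk, mul_zero])]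
  norm_num

lemma pgf_nonneg (μ : ℕ → ℝ≥0∞) {s : ℝ} (hs : 0 ≤ s) : 0 ≤ pgf μ s :=
  tsum_nonneg fun k => by positivity

lemma pgf_le_one (h1 : (∑' k, μ k) = 1) {s : ℝ} (hs0 : 0 ≤ s) (hs1 : s ≤ 1) :
    pgf μ s ≤ 1 := by
  rw [pgf_eq_toReal (mu_ne_top h1) hs0]
  calc (pgfE μ (ENNReal.ofReal s)).toReal ≤ (1 : ℝ≥0∞).toReal :=
        ENNReal.toReal_mono ENNReal.one_ne_top (pgfE_mu_le_one h1 hs1)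
    _ = 1 := ENNReal.toReal_one

lemma pgf_contOn (h1 : (∑' k, μ k) = 1) : ContinuousOn (pgf μ) (Set.Icc (0:ℝ) 1) := by
  apply continuousOn_tsum (u := fun k => (μ k).toReal)
  · exact fun k => (continuous_const.mul (continuous_pow k)).continuousOn
  · exact ENNReal.summable_toReal (by rw [h1]; exact ENNReal.one_ne_top)
  · intro k x hx
    rw [Real.norm_eq_abs, abs_mul, abs_of_nonneg ENNReal.toReal_nonneg, abs_pow]
    have hx1 : |x| ≤ 1 := abs_le.mpr ⟨by linarith [hx.1], hx.2⟩
    have := pow_le_one₀ (abs_nonneg x) hx1 (n := k)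
    nlinarith [ENNReal.toReal_nonneg (a := μ k), pow_nonneg (abs_nonneg x) k]

end facts

lemma exp_neg_ge (x : ℝ) : 1 - x ≤ Real.exp (-x) := by
  have := Real.add_one_le_exp (-x); linarith

lemma exp_neg_le {x : ℝ} (h0 : 0 ≤ x) (h1 : x ≤ 1) :
    Real.exp (-x) ≤ 1 - x + x ^ 2 / 2 := by
  have habs : |(-x)| = x := by rw [abs_neg, abs_of_nonneg h0]
  have hb := Real.exp_bound (x := -x) (by rw [habs]; exact h1) (n := 4) (by norm_num)
  rw [habs] at hb
  have hsum : ∑ m ∈ Finset.range 4, (-x) ^ m / (m.factorial : ℝ)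
      = 1 - x + x ^ 2 / 2 - x ^ 3 / 6 := by
    norm_num [Finset.sum_range_succ, Nat.factorial]
    ring
  rw [hsum] at hb
  have hb' := (abs_le.mp hb).2
  have hx43 : x ^ 4 ≤ x ^ 3 := pow_le_pow_of_le_one h0 h1 (by norm_num)
  norm_num [Nat.factorial] at hb'
  nlinarith [pow_nonneg h0 3, pow_nonneg h0 4]

lemma sqrt2_cond {α : ℝ} (hα0 : 0 < α) (hα1 : α ≤ Real.sqrt 2 - 1) :
    2 * α + α ^ 2 ≤ 1 := by
  have h2 : Real.sqrt 2 ^ 2 = 2 := Real.sq_sqrt (by norm_num)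
  have h : α + 1 ≤ Real.sqrt 2 := by linarith
  nlinarith [Real.sqrt_nonneg 2]

lemma alpha_lt_one {α : ℝ} (hα0 : 0 < α) (hα1 : α ≤ Real.sqrt 2 - 1) : α < 1 := by
  have h2 : Real.sqrt 2 ^ 2 = 2 := Real.sq_sqrt (by norm_num)
  nlinarith [Real.sqrt_nonneg 2]

lemma F_pos {α s : ℝ} (hα0 : 0 < α) (hcond : 2 * α + α ^ 2 ≤ 1) (hαlt : α < 1)
    (hs0 : 0 < s) (hs1 : s < 1) :
    0 < ((1 + α) * s + 1 - α) ^ 2 - 4 * s * Real.exp (α * (s - 1)) := by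
  have harg : α * (s - 1) = -(α * (1 - s)) := by ring
  have hexp : Real.exp (α * (s - 1)) ≤ 1 - α * (1 - s) + (α * (1 - s)) ^ 2 / 2 := by
    rw [harg]
    exact exp_neg_le (by nlinarith) (by nlinarith)
  have hmul : 4 * s * Real.exp (α * (s - 1)) ≤
      4 * s * (1 - α * (1 - s) + (α * (1 - s)) ^ 2 / 2) := by
    apply mul_le_mul_of_nonneg_left hexp (by linarith)
  have key : ((1 + α) * s + 1 - α) ^ 2 - 4 * s * (1 - α * (1 - s) + (α * (1 - s)) ^ 2 / 2)
      = (1 - s) ^ 2 * (1 - 2 * α - α ^ 2) + 2 * α ^ 2 * (1 - s) ^ 3 := by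
    ring
  nlinarith [sq_nonneg (1 - s), pow_pos (show (0:ℝ) < 1 - s by linarith) 3,
    mul_pos (mul_pos (show (0:ℝ) < 2 * α ^ 2 by positivity)
      (pow_pos (show (0:ℝ) < 1 - s by linarith) 3)) one_pos]


set_option maxHeartbeats 1000000 in
/-- For 0 < α ≤ √2 − 1, the pgf of any X satisfying the RDE is
G(s) = (1/2)((1+α)s + 1 − α + √(((1+α)s + 1 − α)² − 4s·exp(α(s−1)))) for s ∈ [0,1]. -/
theorem pgf_formula_small_alpha
    (α : ℝ) (hα0 : 0 < α) (hα1 : α ≤ Real.sqrt 2 - 1)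
    (μ : ℕ → ℝ≥0∞) (hμ : SatisfiesRDE α μ) :
    ∀ s ∈ Set.Icc (0 : ℝ) 1,
      pgf μ s = (1 / 2) * ((1 + α) * s + 1 - α +
        Real.sqrt (((1 + α) * s + 1 - α) ^ 2 - 4 * s * Real.exp (α * (s - 1)))) := by
  have h1 := hμ.1
  have hαlt : α < 1 := alpha_lt_one hα0 hα1
  have hcond : 2 * α + α ^ 2 ≤ 1 := sqrt2_cond hα0 hα1
  -- abstract p
  have hquad0 := fun (x : ℝ) (hx : x ∈ Set.Icc (0:ℝ) 1) => quad_identity hα0.le hμ hx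
  have hG0 : pgf μ 0 = (μ 0).toReal := pgf_at_zero μ
  obtain ⟨p, hp⟩ : ∃ q : ℝ, (μ 0).toReal = q := ⟨_, rfl⟩
  rw [hp] at hquad0 hG0
  have hp0 : 0 ≤ p := hp ▸ ENNReal.toReal_nonneg
  have hp1 : p ≤ 1 := by
    have := pgf_le_one h1 (le_refl (0:ℝ)) zero_le_one
    rw [hG0] at this; exact this
  have hGcont := pgf_contOn h1
  -- squared identity
  have hsq : ∀ x ∈ Set.Icc (0:ℝ) 1,
      (2 * pgf μ x - ((2 - p) * x + p)) ^ 2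
        = ((2 - p) * x + p) ^ 2 - 4 * x * Real.exp (α * (x - 1)) := by
    intro x hx
    linear_combination 4 * hquad0 x hx
  have hfnonneg : ∀ x ∈ Set.Icc (0:ℝ) 1,
      0 ≤ ((2 - p) * x + p) ^ 2 - 4 * x * Real.exp (α * (x - 1)) := by
    intro x hx; rw [← hsq x hx]; positivity
  -- Step 1: p ≥ 1 - α
  have key1 : ∀ t : ℝ, 0 < t → t ≤ 1 →
      0 ≤ 4 * t * (p + α - 1) + ((2 - p) ^ 2 - 4 * α) * t ^ 2 := by
    intro t ht0 ht1
    have hx : (1:ℝ) - t ∈ Set.Icc (0:ℝ) 1 := ⟨by linarith, by linarith⟩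
    have h0 := hfnonneg (1 - t) hx
    have harg : α * (1 - t - 1) = -(α * t) := by ring
    rw [harg] at h0
    have hE := exp_neg_ge (α * t)
    have hmul := mul_le_mul_of_nonneg_left hE (show (0:ℝ) ≤ 4 * (1 - t) by linarith)
    have hring : ((2 - p) * (1 - t) + p) ^ 2 - 4 * (1 - t) * (1 - α * t)
        = 4 * t * (p + α - 1) + ((2 - p) ^ 2 - 4 * α) * t ^ 2 := by ring
    linarith [h0, hmul, hring]
  have hpge : 1 - α ≤ p := by
    by_contra hcon
    push_neg at hcon
    have hε0 : 0 < 1 - α - p := by linarith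
    have hC0 : 0 < |(2 - p) ^ 2 - 4 * α| + 1 := by positivity
    set C := |(2 - p) ^ 2 - 4 * α| + 1 with hCdef
    set t := min 1 (2 * (1 - α - p) / C) with htdef
    have ht0 : 0 < t := lt_min one_pos (by positivity)
    have ht1 : t ≤ 1 := min_le_left _ _
    have htC : t * C ≤ 2 * (1 - α - p) := by
      have ht2 : t ≤ 2 * (1 - α - p) / C := min_le_right _ _
      calc t * C ≤ (2 * (1 - α - p) / C) * C :=
            mul_le_mul_of_nonneg_right ht2 hC0.le
        _ = 2 * (1 - α - p) := by field_simp
    have hk := key1 t ht0 ht1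
    have hD : (2 - p) ^ 2 - 4 * α ≤ C := by
      rw [hCdef]; linarith [le_abs_self ((2 - p) ^ 2 - 4 * α)]
    nlinarith [mul_le_mul_of_nonneg_left hD (sq_nonneg t), mul_pos hε0 ht0,
      mul_le_mul_of_nonneg_left htC ht0.le]
  have hppos : 0 < p := by linarith
  -- Step 2: positivity of discriminant on (0,1)
  have hfpos : ∀ x, 0 < x → x < 1 →
      0 < ((2 - p) * x + p) ^ 2 - 4 * x * Real.exp (α * (x - 1)) := by
    intro x hx0 hx1
    have hF := F_pos hα0 hcond hαlt hx0 hx1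
    have hd : (1 + α) * x + 1 - α ≤ (2 - p) * x + p := by nlinarith
    have hq0 : (0:ℝ) ≤ (1 + α) * x + 1 - α := by nlinarith
    nlinarith
  -- Step 3: 2G - b > 0 on [0,1)
  have hne : ∀ x, 0 < x → x < 1 → 2 * pgf μ x - ((2 - p) * x + p) ≠ 0 := by
    intro x hx0 hx1 h0
    have h := hsq x ⟨hx0.le, hx1.le⟩
    rw [h0] at h
    have := hfpos x hx0 hx1
    nlinarith
  have hpos : ∀ x, 0 ≤ x → x < 1 → 0 < 2 * pgf μ x - ((2 - p) * x + p) := by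
    intro x hx0 hx1
    rcases eq_or_lt_of_le hx0 with h|h
    · rw [← h, hG0]; linarith
    · by_contra hle
      push_neg at hle
      have hlt : 2 * pgf μ x - ((2 - p) * x + p) < 0 :=
        lt_of_le_of_ne hle (hne x h hx1)
      have hsub : Set.Icc (0:ℝ) x ⊆ Set.Icc 0 1 := Set.Icc_subset_Icc le_rfl hx1.le
      have hcx : ContinuousOn (fun y => 2 * pgf μ y - ((2 - p) * y + p)) (Set.Icc 0 x) := by
        apply ContinuousOn.sub
        · exact (continuousOn_const.mul (hGcont.mono hsub))
        · exact (Continuous.continuousOn (by continuity))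
      have h0mem : (0:ℝ) ∈ Set.Ioo (2 * pgf μ x - ((2 - p) * x + p))
          (2 * pgf μ 0 - ((2 - p) * 0 + p)) := by
        constructor
        · exact hlt
        · rw [hG0]; linarith
      obtain ⟨c, hc, hceq⟩ := intermediate_value_Ioo' hx0 hcx h0mem
      exact hne c hc.1 (lt_trans hc.2 hx1) (by simpa using hceq)
  -- Step 4: p ≤ 1 - α
  have key2 : ∀ t : ℝ, 0 < t → t < 1 → 4 * (p + α - 1) ≤ (4 * α + 2 * α ^ 2) * t := by
    intro t ht0 ht1
    have hx0 : (0:ℝ) ≤ 1 - t := by linarith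
    have hx1 : 1 - t < 1 := by linarith
    have hpos' := hpos (1 - t) hx0 hx1
    have hGle := pgf_le_one h1 hx0 (by linarith : (1:ℝ) - t ≤ 1)
    have hstep : 2 * pgf μ (1 - t) - ((2 - p) * (1 - t) + p) ≤ (2 - p) * t := by
      nlinarith
    have hup : (2 * pgf μ (1 - t) - ((2 - p) * (1 - t) + p)) ^ 2 ≤ (2 - p) ^ 2 * t ^ 2 := by
      nlinarith [hpos'.le, hstep]
    have hsqx := hsq (1 - t) ⟨hx0, by linarith⟩
    have harg : α * (1 - t - 1) = -(α * t) := by ring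
    rw [harg] at hsqx
    have hE : Real.exp (-(α * t)) ≤ 1 - α * t + (α * t) ^ 2 / 2 :=
      exp_neg_le (by positivity) (by nlinarith)
    have hmul : 4 * (1 - t) * Real.exp (-(α * t))
        ≤ 4 * (1 - t) * (1 - α * t + (α * t) ^ 2 / 2) :=
      mul_le_mul_of_nonneg_left hE (by linarith)
    have hring : ((2 - p) * (1 - t) + p) ^ 2 - 4 * (1 - t) * (1 - α * t + (α * t) ^ 2 / 2)
        = 4 * t * (p + α - 1) + ((2 - p) ^ 2 - 4 * α - 2 * α ^ 2) * t ^ 2 + 2 * α ^ 2 * t ^ 3 := by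
      ring
    have h5 : t * (4 * (p + α - 1)) ≤ t * ((4 * α + 2 * α ^ 2) * t) := by
      nlinarith [hsqx, hup, hmul, hring, mul_pos (show (0:ℝ) < 2 * α ^ 2 by positivity) (pow_pos ht0 3)]
    exact (mul_le_mul_iff_right₀ ht0).mp h5
  have hple : p ≤ 1 - α := by
    by_contra hcon
    push_neg at hcon
    have hδ : 0 < 4 * (p + α - 1) := by linarith
    have hK : 0 < 4 * α + 2 * α ^ 2 := by positivity
    set t := min (1/2 : ℝ) ((4 * (p + α - 1)) / (2 * (4 * α + 2 * α ^ 2))) with htdef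
    have ht0 : 0 < t := lt_min (by norm_num) (by positivity)
    have ht1 : t < 1 := lt_of_le_of_lt (min_le_left _ _) (by norm_num)
    have hk2 := key2 t ht0 ht1
    have ht2 : t ≤ (4 * (p + α - 1)) / (2 * (4 * α + 2 * α ^ 2)) := min_le_right _ _
    have hfin : (4 * α + 2 * α ^ 2) * t ≤ 4 * (p + α - 1) / 2 := by
      calc (4 * α + 2 * α ^ 2) * t
          ≤ (4 * α + 2 * α ^ 2) * ((4 * (p + α - 1)) / (2 * (4 * α + 2 * α ^ 2))) :=
            mul_le_mul_of_nonneg_left ht2 hK.le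
        _ = 4 * (p + α - 1) / 2 := by field_simp
    linarith
  have hpeq : p = 1 - α := le_antisymm hple hpge
  -- Final assembly
  intro s hs
  obtain ⟨hs0, hs1⟩ := hs
  rcases eq_or_lt_of_le hs1 with hseq|hslt
  · rw [hseq, pgf_at_one h1]
    have hz : ((1 + α) * 1 + 1 - α) ^ 2 - 4 * 1 * Real.exp (α * (1 - 1)) = 0 := by
      rw [show α * ((1:ℝ) - 1) = 0 by ring, Real.exp_zero]; ring
    rw [hz, Real.sqrt_zero]
    ring
  · have hpos' := hpos s hs0 hslt
    have hb : (2 - p) * s + p = (1 + α) * s + 1 - α := by rw [hpeq]; ring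
    have hsqs := hsq s ⟨hs0, hs1⟩
    rw [hb] at hsqs hpos'
    have hsqrt : Real.sqrt (((1 + α) * s + 1 - α) ^ 2 - 4 * s * Real.exp (α * (s - 1)))
        = 2 * pgf μ s - ((1 + α) * s + 1 - α) := by
      rw [← hsqs]
      exact Real.sqrt_sq hpos'.le
    rw [hsqrt]
    ring
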